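/- arXiv:2401.00392 — 2 statements merged into one kernel-verified Lean document; each statement's English description precedes it below -/
import Mathlib

section
/- Let G be a triangle-free graph on 41 vertices in which every vertex has degree 8 or 9. Then there exists a vertex v of degree 8 such that the induced subgraph on the set of vertices not adjacent to v and not equal to v (the dual neighbourhood of v) has at most 112 edges. -/
open Finset SimpleGraph

/-- Edge-count bound: edges of the dual neighbourhood plus the degree sum over the
neighbourhood fit inside the total edge count (neighbourhood is independent). -/
lemma dual_nbhd_edge_bound {V : Type*} [Fintype V] [DecidableEq V]
    (G : SimpleGraph V) [DecidableRel G.Adj]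
    (hnt : ∀ a b c : V, G.Adj a b → G.Adj a c → G.Adj b c → False) (v : V) :
    (G.induce {w | w ≠ v ∧ ¬ G.Adj v w}).edgeFinset.card
      + ∑ w ∈ G.neighborFinset v, G.degree w ≤ G.edgeFinset.card := by
  classical
  set S : Set V := {w | w ≠ v ∧ ¬ G.Adj v w} with hS
  set N : Finset V := G.neighborFinset v with hN
  set K : Finset (Sym2 V) := N.biUnion (fun w => G.incidenceFinset w) with hK
  set I : Finset (Sym2 V) :=
    (G.induce S).edgeFinset.image (Sym2.map (Subtype.val)) with hI
  have hKcard : K.card = ∑ w ∈ N, G.degree w := by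
    rw [hK, Finset.card_biUnion]
    · exact Finset.sum_congr rfl fun w _ => G.card_incidenceFinset_eq_degree w
    · intro a ha b hb hab
      simp only [Function.onFun, Finset.disjoint_left]
      intro e hea heb
      rw [mem_incidenceFinset] at hea heb
      have hadj : G.Adj a b := G.adj_of_mem_incidenceSet hab hea heb
      rw [hN, Finset.mem_coe, mem_neighborFinset] at ha hb
      exact hnt v a b ha hb hadj
  have himage : ∀ e ∈ (G.induce S).edgeFinset,
      (Sym2.map (Subtype.val) e) ∈ G.edgeFinset ∧
        ∀ x ∈ (Sym2.map (Subtype.val) e), ¬ G.Adj v x := by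
    intro e he
    induction e using Sym2.ind with
    | _ a b =>
      rw [mem_edgeFinset, mem_edgeSet] at he
      have hadj : G.Adj a.val b.val := he
      rw [Sym2.map_pair_eq]
      refine ⟨by rw [mem_edgeFinset, mem_edgeSet]; exact hadj, ?_⟩
      intro x hx
      rw [Sym2.mem_iff] at hx
      rcases hx with rfl | rfl
      · exact a.2.2
      · exact b.2.2
  have hIcard : I.card = (G.induce S).edgeFinset.card :=
    Finset.card_image_of_injective _ (Sym2.map.injective Subtype.val_injective)
  have hIsub : I ⊆ G.edgeFinset := by
    intro e he
    rw [hI, Finset.mem_image] at he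
    obtain ⟨e', he', rfl⟩ := he
    exact (himage e' he').1
  have hKsub : K ⊆ G.edgeFinset := by
    intro e he
    rw [hK, Finset.mem_biUnion] at he
    obtain ⟨w, _, hew⟩ := he
    rw [mem_incidenceFinset] at hew
    rw [mem_edgeFinset]
    exact hew.1
  have hdisj : Disjoint I K := by
    rw [Finset.disjoint_left]
    intro e heI heK
    rw [hI, Finset.mem_image] at heI
    obtain ⟨e', he', rfl⟩ := heI
    rw [hK, Finset.mem_biUnion] at heK
    obtain ⟨w, hw, hew⟩ := heK
    rw [mem_incidenceFinset] at hew
    rw [hN, mem_neighborFinset] at hw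
    exact (himage e' he').2 w hew.2 hw
  calc (G.induce S).edgeFinset.card + ∑ w ∈ N, G.degree w
      = I.card + K.card := by rw [hIcard, hKcard]
    _ = (I ∪ K).card := (Finset.card_union_of_disjoint hdisj).symm
    _ ≤ G.edgeFinset.card :=
        Finset.card_le_card (Finset.union_subset hIsub hKsub)

/-- In a triangle-free graph on 41 vertices with all degrees 8 or 9, some vertex `v` of
degree 8 has dual neighbourhood (the induced subgraph on the vertices distinct from `v`
and not adjacent to `v`) with at most 112 edges. -/
theorem exists_degree_eight_vertex_small_dual_neighborhood
    {V : Type*} [Fintype V] [DecidableEq V] (G : SimpleGraph V) [DecidableRel G.Adj]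
    (hcard : Fintype.card V = 41) (hG : G.CliqueFree 3)
    (hdeg : ∀ v : V, G.degree v = 8 ∨ G.degree v = 9) :
    ∃ v : V, G.degree v = 8 ∧
      (G.induce {w | w ≠ v ∧ ¬ G.Adj v w}).edgeFinset.card ≤ 112 := by
  classical
  have hnt : ∀ a b c : V, G.Adj a b → G.Adj a c → G.Adj b c → False := by
    intro a b c h1 h2 h3
    exact hG {a, b, c} (is3Clique_triple_iff.mpr ⟨h1, h2, h3⟩)
  set A : Finset V := Finset.univ.filter (fun u => G.degree u = 8) with hA
  set a : ℕ := A.card with ha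
  -- degree sum formula
  have hsum : ∑ u : V, G.degree u = 2 * G.edgeFinset.card :=
    G.sum_degrees_eq_twice_card_edges
  have hsum' : ∑ u : V, G.degree u + a = 9 * 41 := by
    rw [← hcard]
    have : ∀ u : V, G.degree u + (if G.degree u = 8 then 1 else 0) = 9 := by
      intro u
      rcases hdeg u with h | h <;> simp [h]
    calc ∑ u : V, G.degree u + a
        = ∑ u : V, (G.degree u + if G.degree u = 8 then 1 else 0) := by
          rw [Finset.sum_add_distrib, ha, hA, Finset.card_filter]
      _ = ∑ _u : V, 9 := Finset.sum_congr rfl fun u _ => this u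
      _ = 9 * Fintype.card V := by
          rw [Finset.sum_const, smul_eq_mul, mul_comm]; rfl
  have hkey : 2 * G.edgeFinset.card + a = 369 := by rw [← hsum]; omega
  have haodd : a % 2 = 1 := by omega
  have hApos : A.Nonempty := Finset.card_pos.mp (by omega)
  -- choose v ∈ A with few A-neighbours
  have hchoose : ∃ v ∈ A, 2 * ((G.neighborFinset v).filter (fun w => w ∈ A)).card + 1 ≤ a := by
    by_cases hcase : ∃ u ∈ A, ∃ w ∈ A, G.Adj u w
    · obtain ⟨u, hu, w, hw, huw⟩ := hcase
      have hdisj : Disjoint ((G.neighborFinset u).filter (fun x => x ∈ A))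
          ((G.neighborFinset w).filter (fun x => x ∈ A)) := by
        rw [Finset.disjoint_left]
        intro x hxu hxw
        rw [Finset.mem_filter, mem_neighborFinset] at hxu hxw
        exact hnt u w x huw hxu.1 hxw.1
      have hsub : ((G.neighborFinset u).filter (fun x => x ∈ A))
          ∪ ((G.neighborFinset w).filter (fun x => x ∈ A)) ⊆ A := by
        intro x hx
        rw [Finset.mem_union] at hx
        rcases hx with h | h <;> exact (Finset.mem_filter.mp h).2
      have hle : ((G.neighborFinset u).filter (fun x => x ∈ A)).card
          + ((G.neighborFinset w).filter (fun x => x ∈ A)).card ≤ a := by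
        rw [← Finset.card_union_of_disjoint hdisj]
        exact Finset.card_le_card hsub
      rcases le_total (((G.neighborFinset u).filter (fun x => x ∈ A)).card)
          (((G.neighborFinset w).filter (fun x => x ∈ A)).card) with h | h
      · exact ⟨u, hu, by omega⟩
      · exact ⟨w, hw, by omega⟩
    · push_neg at hcase
      obtain ⟨v, hv⟩ := hApos
      refine ⟨v, hv, ?_⟩
      have : ((G.neighborFinset v).filter (fun w => w ∈ A)).card = 0 := by
        rw [Finset.card_eq_zero, Finset.filter_eq_empty_iff]
        intro w hw
        rw [mem_neighborFinset] at hw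
        exact fun hwA => hcase v hv w hwA hw
      omega
  obtain ⟨v, hvA, hvsmall⟩ := hchoose
  have hv8 : G.degree v = 8 := by
    rw [hA, Finset.mem_filter] at hvA; exact hvA.2
  refine ⟨v, hv8, ?_⟩
  set d : ℕ := ((G.neighborFinset v).filter (fun w => w ∈ A)).card with hd
  -- degree sum over the neighbourhood
  have hNsum : ∑ w ∈ G.neighborFinset v, G.degree w + d = 72 := by
    have hsplit := Finset.sum_filter_add_sum_filter_not (G.neighborFinset v)
      (fun w => w ∈ A) (fun w => G.degree w)
    have h8 : ∑ w ∈ (G.neighborFinset v).filter (fun w => w ∈ A), G.degree w = 8 * d := by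
      rw [Finset.sum_congr rfl (fun w hw => ?_), Finset.sum_const, smul_eq_mul, mul_comm]
      exact (Finset.mem_filter.mp (Finset.mem_filter.mp hw).2).2
    have h9 : ∑ w ∈ (G.neighborFinset v).filter (fun w => ¬ w ∈ A), G.degree w
        = 9 * ((G.neighborFinset v).filter (fun w => ¬ w ∈ A)).card := by
      rw [Finset.sum_congr rfl (fun w hw => ?_), Finset.sum_const, smul_eq_mul, mul_comm]
      have hwA := (Finset.mem_filter.mp hw).2
      rcases hdeg w with h | h
      · exact absurd (Finset.mem_filter.mpr ⟨Finset.mem_univ w, h⟩) hwA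
      · exact h
    have hcards : d + ((G.neighborFinset v).filter (fun w => ¬ w ∈ A)).card = 8 := by
      rw [hd, Finset.card_filter_add_card_filter_not, card_neighborFinset_eq_degree,
        hv8]
    omega
  have hbound := dual_nbhd_edge_bound G hnt v
  omega
end

section
/- If Γ is a triangle-free graph on 41 vertices with no independent set of size 10, and every vertex of Γ has degree 8 or 9, then there is a vertex v of degree 8 whose dual neighbourhood is a triangle-free graph on 32 vertices with no independent set of size 9 and at most 112 edges. -/
open Finset SimpleGraph

/-- If `Γ` is a triangle-free graph on 41 vertices with no independent 10-set in which
every vertex has degree 8 or 9, then some vertex `v` of degree 8 has dual neighbourhood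
which is a triangle-free graph on 32 vertices with no independent 9-set and at most 112
edges. -/
theorem exists_good_dual_neighborhood
    {V : Type*} [Fintype V] [DecidableEq V] (Γ : SimpleGraph V) [DecidableRel Γ.Adj]
    (hcard : Fintype.card V = 41)
    (hG3 : Γ.CliqueFree 3) (hG10 : Γᶜ.CliqueFree 10)
    (hdeg : ∀ v : V, Γ.degree v = 8 ∨ Γ.degree v = 9) :
    ∃ v : V, Γ.degree v = 8 ∧
      Fintype.card {w : V // w ≠ v ∧ ¬ Γ.Adj v w} = 32 ∧
      (Γ.induce {w | w ≠ v ∧ ¬ Γ.Adj v w}).CliqueFree 3 ∧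
      ((Γ.induce {w | w ≠ v ∧ ¬ Γ.Adj v w})ᶜ).CliqueFree 9 ∧
      (Γ.induce {w | w ≠ v ∧ ¬ Γ.Adj v w}).edgeFinset.card ≤ 112 := by
  classical
  set A : Finset V := univ.filter (fun w => Γ.degree w = 8) with hA
  -- degree sum
  have hsum2 : (∑ w, Γ.degree w) + A.card = 369 := by
    have h1 : ∑ w, Γ.degree w = ∑ w ∈ A, Γ.degree w + ∑ w ∈ univ.filter (fun w => ¬ Γ.degree w = 8), Γ.degree w :=
      (Finset.sum_filter_add_sum_filter_not _ _ _).symm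
    have h2 : ∑ w ∈ A, Γ.degree w = 8 * A.card := by
      rw [Finset.sum_congr rfl (fun w hw => (Finset.mem_filter.mp hw).2)]
      rw [Finset.sum_const, smul_eq_mul, mul_comm]
    have h3 : ∑ w ∈ univ.filter (fun w => ¬ Γ.degree w = 8), Γ.degree w
        = 9 * (univ.filter (fun w => ¬ Γ.degree w = 8)).card := by
      rw [Finset.sum_congr rfl (fun w hw => ((hdeg w).resolve_left (Finset.mem_filter.mp hw).2))]
      simp [mul_comm]
    have h4 : A.card + (univ.filter (fun w => ¬ Γ.degree w = 8)).card = 41 := by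
      rw [Finset.card_filter_add_card_filter_not]
      simpa using hcard
    omega
  have hodd : A.card % 2 = 1 := by
    have := Γ.sum_degrees_eq_twice_card_edges
    omega
  -- find good vertex v
  obtain ⟨v, hv8, hk⟩ : ∃ v, Γ.degree v = 8 ∧ 2 * (Γ.neighborFinset v ∩ A).card + 1 ≤ A.card := by
    by_contra hcon
    push_neg at hcon
    obtain ⟨v₀, hv₀⟩ : A.Nonempty := Finset.card_pos.mp (by omega)
    have hv₀8 : Γ.degree v₀ = 8 := (Finset.mem_filter.mp hv₀).2
    have hk₀ : A.card ≤ 2 * (Γ.neighborFinset v₀ ∩ A).card := by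
      have := hcon v₀ hv₀8; omega
    have hpos : 0 < (Γ.neighborFinset v₀ ∩ A).card := by omega
    obtain ⟨u, hu⟩ := Finset.card_pos.mp hpos
    rw [Finset.mem_inter] at hu
    have hu8 : Γ.degree u = 8 := (Finset.mem_filter.mp hu.2).2
    have hadj : Γ.Adj v₀ u := (Γ.mem_neighborFinset _ _).mp hu.1
    have hku : A.card ≤ 2 * (Γ.neighborFinset u ∩ A).card := by
      have := hcon u hu8; omega
    have hsub : (Γ.neighborFinset v₀ ∩ A) ∪ (Γ.neighborFinset u ∩ A) ⊆ A := by
      intro x hx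
      rcases Finset.mem_union.mp hx with h | h <;> exact (Finset.mem_inter.mp h).2
    have hcards := Finset.card_inter_add_card_union (Γ.neighborFinset v₀ ∩ A) (Γ.neighborFinset u ∩ A)
    have hle := Finset.card_le_card hsub
    have hipos : 0 < ((Γ.neighborFinset v₀ ∩ A) ∩ (Γ.neighborFinset u ∩ A)).card := by omega
    obtain ⟨x, hx⟩ := Finset.card_pos.mp hipos
    simp only [Finset.mem_inter, SimpleGraph.mem_neighborFinset] at hx
    exact hG3 {v₀, u, x} (SimpleGraph.is3Clique_triple_iff.mpr ⟨hadj, hx.1.1, hx.2.1⟩)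
  set S : Set V := {w | w ≠ v ∧ ¬ Γ.Adj v w} with hSdef
  set sF : Finset V := univ.filter (fun w => w ≠ v ∧ ¬ Γ.Adj v w) with hsFdef
  have hvN : v ∉ Γ.neighborFinset v := by simp
  have hsF : sF = (insert v (Γ.neighborFinset v))ᶜ := by
    ext w
    simp only [hsFdef, Finset.mem_filter, Finset.mem_univ, true_and, Finset.mem_compl,
      Finset.mem_insert, SimpleGraph.mem_neighborFinset, not_or]
  have hsFcard : sF.card = 32 := by
    rw [hsF, Finset.card_compl, Finset.card_insert_of_notMem hvN,
      Γ.card_neighborFinset_eq_degree, hv8, hcard]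
  refine ⟨v, hv8, ?_, ?_, ?_, ?_⟩
  · rw [Fintype.card_subtype]
    exact hsFcard
  · exact hG3.comap (Embedding.induce _).isContained
  · intro t ht
    refine hG10 (insert v (t.image Subtype.val)) ⟨?_, ?_⟩
    · intro a ha b hb hab
      simp only [Finset.coe_insert, Set.mem_insert_iff, Finset.coe_image, Set.mem_image,
        Finset.mem_coe] at ha hb
      rw [SimpleGraph.compl_adj]
      refine ⟨hab, ?_⟩
      rcases ha with rfl | ⟨x, hx, rfl⟩
      · rcases hb with rfl | ⟨y, hy, rfl⟩
        · exact absurd rfl hab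
        · exact y.2.2
      · rcases hb with rfl | ⟨y, hy, rfl⟩
        · intro hadj; exact x.2.2 hadj.symm
        · have hxy : x ≠ y := fun h => hab (by rw [h])
          have h2 := ht.1 (Finset.mem_coe.mpr hx) (Finset.mem_coe.mpr hy) hxy
          rw [SimpleGraph.compl_adj] at h2
          exact h2.2
    · rw [Finset.card_insert_of_notMem, Finset.card_image_of_injective _ Subtype.val_injective,
        ht.2]
      intro hv
      obtain ⟨x, _, hx⟩ := Finset.mem_image.mp hv
      exact x.2.1 hx
  · -- edge bound
    set N : Finset V := Γ.neighborFinset v with hN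
    have hmemS : ∀ w : V, w ∈ sF ↔ w ∈ S := by
      intro w; simp [hsFdef, hSdef]
    have hdegH : ∀ a : {w : V // w ∈ S}, (Γ.induce S).degree a
        = (Γ.neighborFinset ↑a ∩ sF).card := by
      intro a
      rw [← SimpleGraph.card_neighborFinset_eq_degree]
      rw [← Finset.card_image_of_injective _ Subtype.val_injective]
      congr 1
      ext w
      simp only [Finset.mem_image, SimpleGraph.mem_neighborFinset, Finset.mem_inter]
      constructor
      · rintro ⟨b, hb, rfl⟩
        exact ⟨hb, (hmemS ↑b).mpr b.2⟩
      · rintro ⟨hadj, hw⟩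
        exact ⟨⟨w, (hmemS w).mp hw⟩, hadj, rfl⟩
    have hsh : ∑ w ∈ sF, (Γ.neighborFinset w ∩ sF).card = 2 * (Γ.induce S).edgeFinset.card := by
      rw [← SimpleGraph.sum_degrees_eq_twice_card_edges]
      rw [Finset.sum_subtype sF hmemS (fun w => (Γ.neighborFinset w ∩ sF).card)]
      exact Finset.sum_congr rfl (fun a _ => (hdegH a).symm)
    have hsplit : ∑ w ∈ sF, (Γ.neighborFinset w ∩ sF).card
        + ∑ w ∈ sF, (Γ.neighborFinset w ∩ N).card = ∑ w ∈ sF, Γ.degree w := by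
      rw [← Finset.sum_add_distrib]
      refine Finset.sum_congr rfl (fun w hw => ?_)
      have hw' : w ≠ v ∧ ¬ Γ.Adj v w := by simpa [hsFdef] using hw
      have hvnw : v ∉ Γ.neighborFinset w := by
        simp only [SimpleGraph.mem_neighborFinset]
        exact fun h => hw'.2 h.symm
      have h1 : Γ.neighborFinset w ∩ sF = Γ.neighborFinset w \ insert v N := by
        rw [hsF, Finset.sdiff_eq_inter_compl]
      have h2 : Γ.neighborFinset w ∩ insert v N = Γ.neighborFinset w ∩ N :=
        Finset.inter_insert_of_notMem hvnw
      rw [h1, ← h2, Finset.card_sdiff_add_card_inter, Γ.card_neighborFinset_eq_degree]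
    have hexch : ∑ w ∈ sF, (Γ.neighborFinset w ∩ N).card
        = ∑ u ∈ N, (Γ.neighborFinset u ∩ sF).card := by
      have e1 : ∀ w : V, (Γ.neighborFinset w ∩ N).card
          = ∑ u ∈ N, if Γ.Adj w u then 1 else 0 := by
        intro w
        rw [Finset.inter_comm, ← Finset.filter_mem_eq_inter, Finset.card_filter]
        refine Finset.sum_congr rfl (fun u _ => ?_)
        simp only [SimpleGraph.mem_neighborFinset]
      have e2 : ∀ u : V, (Γ.neighborFinset u ∩ sF).card
          = ∑ w ∈ sF, if Γ.Adj w u then 1 else 0 := by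
        intro u
        rw [Finset.inter_comm, ← Finset.filter_mem_eq_inter, Finset.card_filter]
        refine Finset.sum_congr rfl (fun w _ => ?_)
        simp only [SimpleGraph.mem_neighborFinset]
        simp only [Γ.adj_comm u w]
      simp_rw [e1, e2]
      exact Finset.sum_comm
    have h8 : ∑ u ∈ N, (Γ.neighborFinset u ∩ sF).card + 8 = ∑ u ∈ N, Γ.degree u := by
      have hNcard : N.card = 8 := by rw [hN, Γ.card_neighborFinset_eq_degree, hv8]
      have key : ∀ u ∈ N, (Γ.neighborFinset u ∩ sF).card + 1 = Γ.degree u := by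
        intro u hu
        have hadj : Γ.Adj v u := (Γ.mem_neighborFinset _ _).mp hu
        have h1 : Γ.neighborFinset u ∩ sF = Γ.neighborFinset u \ insert v N := by
          rw [hsF, Finset.sdiff_eq_inter_compl]
        have h2 : Γ.neighborFinset u ∩ insert v N = {v} := by
          ext x
          simp only [Finset.mem_inter, SimpleGraph.mem_neighborFinset, Finset.mem_insert,
            Finset.mem_singleton, hN]
          constructor
          · rintro ⟨hux, rfl | hvx⟩
            · rfl
            · exact absurd (SimpleGraph.is3Clique_triple_iff.mpr ⟨hadj, hvx, hux⟩)
                (hG3 {v, u, x})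
          · rintro rfl
            exact ⟨hadj.symm, Or.inl rfl⟩
        have h3 := Finset.card_sdiff_add_card_inter (Γ.neighborFinset u) (insert v N)
        rw [h2, Finset.card_singleton] at h3
        rw [h1, h3, Γ.card_neighborFinset_eq_degree]
      have hs := Finset.sum_congr rfl key
      rw [Finset.sum_add_distrib, ← Finset.card_eq_sum_ones, hNcard] at hs
      exact hs
    have hpart : ∑ w, Γ.degree w = Γ.degree v + ∑ u ∈ N, Γ.degree u + ∑ w ∈ sF, Γ.degree w := by
      have h := Finset.sum_compl_add_sum (insert v N) (fun w => Γ.degree w)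
      rw [← hsF, Finset.sum_insert hvN] at h
      omega
    have h72 : ∑ u ∈ N, Γ.degree u + (N ∩ A).card = 72 := by
      have hNcard : N.card = 8 := by rw [hN, Γ.card_neighborFinset_eq_degree, hv8]
      have key : ∀ u ∈ N, Γ.degree u + (if u ∈ A then 1 else 0) = 9 := by
        intro u _
        by_cases h : u ∈ A
        · have h8 : Γ.degree u = 8 := (Finset.mem_filter.mp h).2
          simp [h, h8]
        · have h9 : Γ.degree u = 9 := (hdeg u).resolve_left
            (fun h8 => h (Finset.mem_filter.mpr ⟨Finset.mem_univ u, h8⟩))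
          simp [h, h9]
      have hca : (N ∩ A).card = ∑ u ∈ N, if u ∈ A then 1 else 0 := by
        rw [← Finset.filter_mem_eq_inter, Finset.card_filter]
      have hs := Finset.sum_congr rfl key
      rw [Finset.sum_add_distrib, Finset.sum_const, smul_eq_mul, hNcard] at hs
      omega
    rw [hv8] at hpart
    show (Γ.induce S).edgeFinset.card ≤ 112
    omega
end
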